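/- Let ε_1,…,ε_n be i.i.d. random variables uniform on {−1,1}. Then E exp( (Σ_{i=1}^n ε_i)² / (4n) ) ≤ 2. -/

import Mathlib

open MeasureTheory Finset Real
open scoped ENNReal

noncomputable section

/-- Rademacher sign associated to a Boolean. -/
def sgn (b : Bool) : ℝ := if b then 1 else -1

/-- Uniform measure on `n` independent Rademacher signs. -/
def signMeasure (n : ℕ) : Measure (Fin n → Bool) :=
  (PMF.uniformOfFintype (Fin n → Bool)).toMeasure

end

lemma integrable_gauss_shift {a : ℝ} (ha : 0 < a) (s : ℝ) :
    Integrable (fun x : ℝ => Real.exp (-a * x ^ 2 + s * x)) := by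
  have h : ∀ x : ℝ, -a * x ^ 2 + s * x = s ^ 2 / (4 * a) + -a * (x - s / (2 * a)) ^ 2 := by
    intro x; field_simp; ring
  simp_rw [h, Real.exp_add]
  exact ((integrable_exp_neg_mul_sq ha).comp_sub_right (s / (2 * a))).const_mul _

lemma integral_gauss_shift {a : ℝ} (ha : 0 < a) (s : ℝ) :
    ∫ x : ℝ, Real.exp (-a * x ^ 2 + s * x)
      = Real.sqrt (π / a) * Real.exp (s ^ 2 / (4 * a)) := by
  have h : ∀ x : ℝ, -a * x ^ 2 + s * x = -a * (x - s / (2 * a)) ^ 2 + s ^ 2 / (4 * a) := by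
    intro x; field_simp; ring
  simp_rw [h, Real.exp_add, integral_mul_const]
  rw [integral_sub_right_eq_self (fun x => Real.exp (-a * x ^ 2)) (s / (2 * a)),
    integral_gaussian]

lemma sum_exp_sum (n : ℕ) (t : ℝ) :
    ∑ b : Fin n → Bool, Real.exp (t * ∑ i, sgn (b i)) = (2 * Real.cosh t) ^ n := by
  simp_rw [Finset.mul_sum, Real.exp_sum]
  have hswap : ∑ b ∈ Fintype.piFinset (fun _ : Fin n => (univ : Finset Bool)),
      ∏ i, Real.exp (t * sgn (b i)) = ∏ _i : Fin n, ∑ x : Bool, Real.exp (t * sgn x) :=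
    (Finset.prod_univ_sum (fun _ : Fin n => (univ : Finset Bool))
      (fun _ x => Real.exp (t * sgn x))).symm
  rw [← Fintype.piFinset_univ, hswap]
  have hx : ∑ x : Bool, Real.exp (t * sgn x) = 2 * Real.cosh t := by
    simp [sgn, Real.cosh_eq]
    ring
  rw [hx]
  simp [Finset.prod_const]

/-- `E exp((Σ εᵢ)²/(4n)) ≤ 2` for i.i.d. Rademacher signs. -/
theorem exp_sq_sum_rademacher_le_two (n : ℕ) :
    (∫ b : Fin n → Bool, Real.exp ((∑ i, sgn (b i)) ^ 2 / (4 * n))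
      ∂(signMeasure n)) ≤ 2 := by
  rw [signMeasure, PMF.integral_eq_sum]
  rcases Nat.eq_zero_or_pos n with h0 | hn
  · subst h0
    norm_num [PMF.uniformOfFintype_apply]
  have hn' : (0 : ℝ) < n := by exact_mod_cast hn
  -- key bound on the plain sum
  have key : ∑ b : Fin n → Bool, Real.exp ((∑ i, sgn (b i)) ^ 2 / (4 * n))
      ≤ 2 ^ n * 2 := by
    have hrep : ∀ b : Fin n → Bool,
        Real.exp ((∑ i, sgn (b i)) ^ 2 / (4 * n))
          = Real.sqrt ((n : ℝ) / π)
            * ∫ x : ℝ, Real.exp (-(n : ℝ) * x ^ 2 + (∑ i, sgn (b i)) * x) := by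
      intro b
      rw [integral_gauss_shift hn', ← mul_assoc, ← Real.sqrt_mul (by positivity)]
      have h1 : ((n : ℝ) / π) * (π / n) = 1 := by
        field_simp
      rw [h1, Real.sqrt_one, one_mul]
    have hpt : ∀ x : ℝ,
        Real.exp (-(n : ℝ) * x ^ 2) * (2 * Real.cosh x) ^ n
          ≤ 2 ^ n * Real.exp (-((n : ℝ) / 2) * x ^ 2) := by
      intro x
      rw [mul_pow]
      calc Real.exp (-(n : ℝ) * x ^ 2) * ((2 : ℝ) ^ n * Real.cosh x ^ n)
          = 2 ^ n * (Real.exp (-(n : ℝ) * x ^ 2) * Real.cosh x ^ n) := by ring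
        _ ≤ 2 ^ n * (Real.exp (-(n : ℝ) * x ^ 2) * Real.exp (x ^ 2 / 2) ^ n) := by
            have h := pow_le_pow_left₀ (Real.cosh_pos (x := x)).le (Real.cosh_le_exp_half_sq x) n
            exact mul_le_mul_of_nonneg_left
              (mul_le_mul_of_nonneg_left h (Real.exp_nonneg _)) (by positivity)
        _ = 2 ^ n * Real.exp (-((n : ℝ) / 2) * x ^ 2) := by
            rw [← Real.exp_nat_mul, ← Real.exp_add]
            congr 1
            ring
    have hint_g : Integrable (fun x : ℝ => 2 ^ n * Real.exp (-((n : ℝ) / 2) * x ^ 2)) :=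
      (integrable_exp_neg_mul_sq (by positivity)).const_mul _
    have hcont : Continuous (fun x : ℝ => Real.exp (-(n : ℝ) * x ^ 2) * (2 * Real.cosh x) ^ n) := by
      continuity
    have hint_f : Integrable (fun x : ℝ => Real.exp (-(n : ℝ) * x ^ 2) * (2 * Real.cosh x) ^ n) := by
      refine hint_g.mono hcont.aestronglyMeasurable (ae_of_all _ fun x => ?_)
      rw [Real.norm_eq_abs, Real.norm_eq_abs, abs_of_nonneg (by positivity),
        abs_of_nonneg (by positivity)]
      exact hpt x
    calc ∑ b : Fin n → Bool, Real.exp ((∑ i, sgn (b i)) ^ 2 / (4 * n))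
        = Real.sqrt ((n : ℝ) / π)
            * ∑ b : Fin n → Bool, ∫ x : ℝ, Real.exp (-(n : ℝ) * x ^ 2 + (∑ i, sgn (b i)) * x) := by
          rw [Finset.mul_sum]
          exact Finset.sum_congr rfl fun b _ => hrep b
      _ = Real.sqrt ((n : ℝ) / π)
            * ∫ x : ℝ, ∑ b : Fin n → Bool, Real.exp (-(n : ℝ) * x ^ 2 + (∑ i, sgn (b i)) * x) := by
          rw [integral_finset_sum _ fun b _ => integrable_gauss_shift hn' _]
      _ = Real.sqrt ((n : ℝ) / π)
            * ∫ x : ℝ, Real.exp (-(n : ℝ) * x ^ 2) * (2 * Real.cosh x) ^ n := by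
          congr 1
          have hfun : ∀ x : ℝ,
              ∑ b : Fin n → Bool, Real.exp (-(n : ℝ) * x ^ 2 + (∑ i, sgn (b i)) * x)
                = Real.exp (-(n : ℝ) * x ^ 2) * (2 * Real.cosh x) ^ n := by
            intro x
            simp_rw [Real.exp_add, ← Finset.mul_sum]
            congr 1
            rw [← sum_exp_sum n x]
            exact Finset.sum_congr rfl fun b _ => by rw [mul_comm]
          simp_rw [hfun]
      _ ≤ Real.sqrt ((n : ℝ) / π)
            * ∫ x : ℝ, 2 ^ n * Real.exp (-((n : ℝ) / 2) * x ^ 2) := by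
          exact mul_le_mul_of_nonneg_left (integral_mono hint_f hint_g hpt)
            (Real.sqrt_nonneg _)
      _ = Real.sqrt ((n : ℝ) / π) * (2 ^ n * Real.sqrt (π / ((n : ℝ) / 2))) := by
          rw [integral_const_mul, integral_gaussian]
      _ = 2 ^ n * Real.sqrt 2 := by
          rw [← mul_assoc, mul_comm (Real.sqrt _) ((2:ℝ) ^ n), mul_assoc,
            ← Real.sqrt_mul (by positivity)]
          congr 2
          field_simp
      _ ≤ 2 ^ n * 2 := by
          have h2 : Real.sqrt 2 ≤ 2 := by
            nlinarith [Real.sq_sqrt (by norm_num : (0:ℝ) ≤ 2), Real.sqrt_nonneg 2]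
          exact mul_le_mul_of_nonneg_left h2 (by positivity)
  -- assemble
  have hcard : (Fintype.card (Fin n → Bool) : ℝ≥0∞) = 2 ^ n := by
    simp [Fintype.card_fun]
  simp_rw [PMF.uniformOfFintype_apply, smul_eq_mul, hcard]
  rw [← Finset.mul_sum]
  have htr : ((2 ^ n : ℝ≥0∞)⁻¹).toReal = ((2 : ℝ) ^ n)⁻¹ := by
    rw [ENNReal.toReal_inv]
    simp
  rw [htr]
  calc ((2:ℝ) ^ n)⁻¹ * ∑ b : Fin n → Bool, Real.exp ((∑ i, sgn (b i)) ^ 2 / (4 * n))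
      ≤ ((2:ℝ) ^ n)⁻¹ * (2 ^ n * 2) := mul_le_mul_of_nonneg_left key (by positivity)
    _ = 2 := by field_simp
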